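/- Let V = ℝ^{m_1} and W = ℝ^{m_2}, with standard bases (e_μ) of V and (ε_b) of W, and let Λ(V), Λ(W) be their exterior algebras over ℝ. Let ζ : W → Λ(V) be a linear map whose image lies in the odd part of Λ(V); since every odd element squares to zero, by the universal property of the exterior algebra there is a unique ℝ-algebra homomorphism φ : Λ(W) → Λ(V) with φ(ι(w)) = ζ(w) for all w ∈ W. Let ∂_μ denote the odd partial derivative on Λ(V), i.e. the unique antiderivation of Λ(V) extending the dual basis element e_μ^* (equivalently, left contraction by e_μ^*), and similarly ∂_b on Λ(W). Then the super chain rule holds: for every f ∈ Λ(W) and every μ ∈ {1, …, m_1}, ∂_μ(φ(f)) = Σ_{b=1}^{m_2} ∂_μ(ζ(ε_b)) · φ(∂_b f). -/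
import Mathlib


/-- The odd part of the `ℤ/2ℤ`-grading of the exterior algebra `Λ(V)`. -/
def ExteriorAlgebra.oddPart (V : Type*) [AddCommGroup V] [Module ℝ V] :
    Submodule ℝ (ExteriorAlgebra ℝ V) :=
  ⨆ i ∈ {i : ℕ | Odd i}, LinearMap.range (ExteriorAlgebra.ι ℝ (M := V)) ^ i

/-- The odd partial derivative `∂_μ` on the exterior algebra `Λ(ℝ^m)`: left contraction
(interior product) by the dual basis vector `e_μ^*`, i.e. the unique antiderivation with
`∂_μ ι(e_ν) = δ_μ^ν`. -/
noncomputable def oddPDeriv {m : ℕ} (μ : Fin m) :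
    ExteriorAlgebra ℝ (Fin m → ℝ) →ₗ[ℝ] ExteriorAlgebra ℝ (Fin m → ℝ) :=
  CliffordAlgebra.contractLeft (LinearMap.proj μ)

open CliffordAlgebra

variable {R : Type*} [CommRing R] {M : Type*} [AddCommGroup M] [Module R M]

private lemma sq_ι_commute (a b : M) (y : ExteriorAlgebra R M) :
    Commute (ExteriorAlgebra.ι R a * ExteriorAlgebra.ι R b) y := by
  have h : ∀ x z : M, ExteriorAlgebra.ι R x * ExteriorAlgebra.ι R z
      = -(ExteriorAlgebra.ι R z * ExteriorAlgebra.ι R x) := by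
    intro x z
    rw [eq_neg_iff_add_eq_zero]
    exact ExteriorAlgebra.ι_add_mul_swap x z
  induction y using CliffordAlgebra.induction with
  | algebraMap r => exact (Algebra.commutes r _).symm
  | ι v =>
    show _ = _
    rw [mul_assoc, h b v, mul_neg, ← mul_assoc, h a v, neg_mul, neg_neg, mul_assoc]
  | mul x y hx hy => exact hx.mul_right hy
  | add x y hx hy => exact hx.add_right hy

private lemma even_commute {z : ExteriorAlgebra R M}
    (hz : z ∈ evenOdd (0 : QuadraticForm R M) 0) (y : ExteriorAlgebra R M) :
    Commute z y := by
  induction z, hz using even_induction with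
  | algebraMap r => exact Algebra.commutes r y
  | add x₁ x₂ h₁ h₂ ih₁ ih₂ => exact ih₁.add_left ih₂
  | ι_mul_ι_mul a b x hx ih => exact (sq_ι_commute a b y).mul_left ih

private lemma contract_odd_mul (d : Module.Dual R M) {x : ExteriorAlgebra R M}
    (hx : x ∈ evenOdd (0 : QuadraticForm R M) 1) (y : ExteriorAlgebra R M) :
    contractLeft d (x * y) = contractLeft d x * y - x * contractLeft d y := by
  induction x, hx using odd_induction with
  | ι v => rw [contractLeft_ι_mul, contractLeft_ι, Algebra.smul_def]
  | add x₁ x₂ h₁ h₂ ih₁ ih₂ =>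
    simp only [add_mul, map_add, ih₁, ih₂]
    abel
  | ι_mul_ι_mul a b x hx ih =>
    rw [mul_assoc, mul_assoc, mul_assoc, contractLeft_ι_mul, contractLeft_ι_mul, ih,
      contractLeft_ι_mul, contractLeft_ι_mul]
    simp only [mul_sub, sub_mul, smul_sub, smul_mul_assoc, mul_smul_comm, mul_assoc]
    abel

private lemma contract_odd_mem (d : Module.Dual R M) {x : ExteriorAlgebra R M}
    (hx : x ∈ evenOdd (0 : QuadraticForm R M) 1) :
    contractLeft d x ∈ evenOdd (0 : QuadraticForm R M) 0 := by
  induction x, hx using odd_induction with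
  | ι v =>
    rw [contractLeft_ι, Algebra.algebraMap_eq_smul_one]
    exact Submodule.smul_mem _ _ (one_le_evenOdd_zero _ (Submodule.one_le.mp le_rfl))
  | add x₁ x₂ h₁ h₂ ih₁ ih₂ =>
    rw [map_add]
    exact Submodule.add_mem _ ih₁ ih₂
  | ι_mul_ι_mul a b x hx ih =>
    rw [mul_assoc, contractLeft_ι_mul, contractLeft_ι_mul]
    refine Submodule.sub_mem _ (Submodule.smul_mem _ _ ?_) ?_
    · exact (show ((1 : ZMod 2) + 1 = 0) by decide) ▸
        SetLike.mul_mem_graded (ι_mem_evenOdd_one _ b) hx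
    · refine (show ((1 : ZMod 2) + 1 = 0) by decide) ▸
        SetLike.mul_mem_graded (ι_mem_evenOdd_one _ a) (Submodule.sub_mem _ (Submodule.smul_mem _ _ hx) ?_)
      exact (show ((1 : ZMod 2) + 0 = 1) by decide) ▸
        SetLike.mul_mem_graded (ι_mem_evenOdd_one _ b) ih


private lemma oddPart_le {V : Type*} [AddCommGroup V] [Module ℝ V] :
    ExteriorAlgebra.oddPart V ≤ evenOdd (0 : QuadraticForm ℝ V) 1 := by
  refine iSup₂_le fun i hi => ?_
  have h : ((i : ℕ) : ZMod 2) = 1 := by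
    obtain ⟨k, rfl⟩ := hi
    push_cast
    rw [show ((2 : ZMod 2)) = 0 by decide]
    ring
  exact le_iSup (fun j : { n : ℕ // ((n : ℕ) : ZMod 2) = 1 } =>
    LinearMap.range (CliffordAlgebra.ι (0 : QuadraticForm ℝ V)) ^ (j : ℕ)) ⟨i, h⟩

/-- **The super chain rule.** Let `ζ : ℝ^{m₂} → Λ(ℝ^{m₁})` be linear with image in the odd
part, and let `φ : Λ(ℝ^{m₂}) → Λ(ℝ^{m₁})` be the `ℝ`-algebra homomorphism with
`φ(ι w) = ζ w` (which exists uniquely since odd elements square to zero). Then for every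
`f ∈ Λ(ℝ^{m₂})` and `μ`:
`∂_μ (φ f) = ∑_b ∂_μ (ζ ε_b) * φ (∂_b f)`, where `ε_b` is the `b`-th standard basis vector. -/
theorem super_chain_rule (m₁ m₂ : ℕ)
    (ζ : (Fin m₂ → ℝ) →ₗ[ℝ] ExteriorAlgebra ℝ (Fin m₁ → ℝ))
    (hζ : ∀ w, ζ w ∈ ExteriorAlgebra.oddPart (Fin m₁ → ℝ))
    (φ : ExteriorAlgebra ℝ (Fin m₂ → ℝ) →ₐ[ℝ] ExteriorAlgebra ℝ (Fin m₁ → ℝ))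
    (hφ : ∀ w, φ (ExteriorAlgebra.ι ℝ w) = ζ w)
    (f : ExteriorAlgebra ℝ (Fin m₂ → ℝ)) (μ : Fin m₁) :
    oddPDeriv μ (φ f) =
      ∑ b : Fin m₂, oddPDeriv μ (ζ (Pi.single b 1)) * φ (oddPDeriv b f) := by
  have hodd : ∀ w, ζ w ∈ evenOdd (0 : QuadraticForm ℝ (Fin m₁ → ℝ)) 1 :=
    fun w => oddPart_le (hζ w)
  induction f using CliffordAlgebra.left_induction with
  | algebraMap r =>
    simp [oddPDeriv, AlgHom.commutes, contractLeft_algebraMap]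
  | add x y hx hy =>
    simp only [map_add, mul_add, Finset.sum_add_distrib, hx, hy]
  | ι_mul x w hx =>
    have hζw : ζ w = ∑ b, w b • ζ (Pi.single b 1) := by
      conv_lhs => rw [show w = ∑ b, Pi.single b (w b) from (Finset.univ_sum_single w).symm]
      rw [map_sum]
      refine Finset.sum_congr rfl fun b _ => ?_
      rw [← map_smul]
      congr 1
      ext j
      simp [Pi.single_apply]
    have hDζw : oddPDeriv μ (ζ w) = ∑ b, w b • oddPDeriv μ (ζ (Pi.single b 1)) := by
      rw [hζw, map_sum]
      simp only [map_smul]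
    calc oddPDeriv μ (φ (ExteriorAlgebra.ι ℝ w * x))
        = oddPDeriv μ (ζ w * φ x) := by rw [map_mul, hφ]
      _ = oddPDeriv μ (ζ w) * φ x - ζ w * oddPDeriv μ (φ x) :=
        contract_odd_mul _ (hodd w) _
      _ = (∑ b, w b • oddPDeriv μ (ζ (Pi.single b 1))) * φ x
          - ∑ b, ζ w * (oddPDeriv μ (ζ (Pi.single b 1)) * φ (oddPDeriv b x)) := by
        rw [hDζw, hx, Finset.mul_sum]
      _ = ∑ b, oddPDeriv μ (ζ (Pi.single b 1)) * φ (oddPDeriv b (ExteriorAlgebra.ι ℝ w * x)) := by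
        rw [Finset.sum_mul, ← Finset.sum_sub_distrib]
        refine Finset.sum_congr rfl fun b _ => ?_
        have hcomm : Commute (oddPDeriv μ (ζ (Pi.single b 1))) (ζ w) :=
          even_commute (contract_odd_mem _ (hodd (Pi.single b 1))) _
        have : oddPDeriv b (ExteriorAlgebra.ι ℝ w * x)
            = w b • x - ExteriorAlgebra.ι ℝ w * oddPDeriv b x := by
          simpa [oddPDeriv] using contractLeft_ι_mul (Q := (0 : QuadraticForm ℝ (Fin m₂ → ℝ)))
            (d := LinearMap.proj b) w x
        rw [this, map_sub, map_smul, map_mul, hφ, mul_sub, mul_smul_comm, smul_mul_assoc,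
          ← mul_assoc, ← hcomm.eq, mul_assoc]
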